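/- arXiv:1312.6081 — 7 statements merged into one kernel-verified Lean document; each statement's English description precedes it below -/
import Mathlib

section
/- Let K ⊆ ℝ be a set containing ℚ such that the complement ℝ \ K meets no Cantor set, i.e., K intersects every copy of the Cantor set in ℝ. If G ⊆ ℝ is a Gδ set with K ⊆ G, then ℝ \ G is countable. -/
/-- If `K ⊆ ℝ` contains `ℚ` and meets every copy of the Cantor set, then the
complement of any `Gδ` set containing `K` is countable. -/
theorem stmt_1 (K G : Set ℝ)
    (hQ : Set.range ((↑) : ℚ → ℝ) ⊆ K)
    (hK : ∀ C : Set ℝ, Nonempty (C ≃ₜ (ℕ → Bool)) → (K ∩ C).Nonempty)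
    (hG : IsGδ G) (hKG : K ⊆ G) :
    Gᶜ.Countable := by
  obtain ⟨T, hTopen, hTcount, rfl⟩ := hG
  rw [Set.compl_sInter]
  apply Set.Countable.sUnion (hTcount.image compl)
  rintro s ⟨t, htT, rfl⟩
  by_contra hunc
  obtain ⟨f, hfrange, hfcont, hfinj⟩ :=
    ((hTopen t htT).isClosed_compl).exists_nat_bool_injection_of_not_countable hunc
  have he : Set.range f ≃ₜ (ℕ → Bool) :=
    ((hfcont.isClosedEmbedding hfinj).toIsEmbedding.toHomeomorph).symm
  obtain ⟨x, hxK, hxC⟩ := hK (Set.range f) ⟨he⟩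
  exact hfrange hxC (hKG hxK t htT)
end

section
/- Let K ⊆ ℝ intersect every copy of the Cantor set in ℝ, and let (A_β)_{β ≤ α} be a family of fewer than continuum many Gδ subsets of ℝ each containing K. Then the set (ℝ \ K) ∩ ⋂_{β ≤ α} A_β has cardinality 2^ℵ₀, provided ℝ \ K has cardinality 2^ℵ₀. -/
open Cardinal

/-- A closed set disjoint from `K` (which meets every Cantor set) is countable. -/
lemma countable_of_closed_compl (K : Set ℝ)
    (hK : ∀ C : Set ℝ, Nonempty (C ≃ₜ (ℕ → Bool)) → (K ∩ C).Nonempty)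
    {t : Set ℝ} (ht : IsClosed t) (htK : t ⊆ Kᶜ) : t.Countable := by
  by_contra hunc
  obtain ⟨f, hrange, hcont, hinj⟩ := ht.exists_nat_bool_injection_of_not_countable hunc
  have hemb := (hcont.isClosedEmbedding hinj).toIsEmbedding
  have e : (ℕ → Bool) ≃ₜ Set.range f := hemb.toHomeomorph
  obtain ⟨x, hxK, hxC⟩ := hK (Set.range f) ⟨e.symm⟩
  exact htK (hrange hxC) hxK

/-- If `K` meets every Cantor set, `ℝ \ K` has cardinality continuum, and
`(A β)` is a family of fewer than continuum many `Gδ` sets each containing `K`,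
then `(ℝ \ K) ∩ ⋂ β, A β` has cardinality continuum. -/
theorem stmt_4 {ι : Type} (K : Set ℝ) (A : ι → Set ℝ)
    (hK : ∀ C : Set ℝ, Nonempty (C ≃ₜ (ℕ → Bool)) → (K ∩ C).Nonempty)
    (hι : #ι < Cardinal.continuum)
    (hGδ : ∀ i, IsGδ (A i)) (hKA : ∀ i, K ⊆ A i)
    (hKc : #(↥Kᶜ) = Cardinal.continuum) :
    #(↥(Kᶜ ∩ ⋂ i, A i)) = Cardinal.continuum := by
  -- each complement `(A i)ᶜ` is countable
  have hcompl : ∀ i, ((A i)ᶜ).Countable := by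
    intro i
    obtain ⟨T, hTopen, hTcount, hTeq⟩ := (hGδ i)
    have : (A i)ᶜ = ⋃ t ∈ T, tᶜ := by
      rw [hTeq]; simp [Set.compl_sInter, Set.sUnion_image, Set.sInter_eq_biInter]
    rw [this]
    refine Set.Countable.biUnion hTcount (fun t htT => ?_)
    refine countable_of_closed_compl K hK (hTopen t htT).isClosed_compl ?_
    intro x hx hxK
    exact hx (Set.mem_sInter.mp (hTeq ▸ hKA i hxK) t htT)
  set S : Set ℝ := ⋃ i, (A i)ᶜ with hS
  have hScard : #S < Cardinal.continuum := by
    calc #S ≤ #ι * ⨆ i, #((A i)ᶜ : Set ℝ) := mk_iUnion_le _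
      _ < Cardinal.continuum := by
        rcases isEmpty_or_nonempty ι with h | h
        · simpa [hS] using aleph0_lt_continuum.trans_le' zero_le |>.trans_le le_rfl
        · exact mul_lt_of_lt aleph0_le_continuum hι
            (lt_of_le_of_lt (ciSup_le' fun i => (hcompl i).le_aleph0) aleph0_lt_continuum)
  have hset : Kᶜ ∩ ⋂ i, A i = Kᶜ \ (Kᶜ ∩ S) := by
    ext x
    simp only [Set.mem_inter_iff, Set.mem_iInter, Set.mem_diff, hS, Set.mem_iUnion,
      Set.mem_compl_iff, not_and, not_exists, not_not]
    tauto
  rw [hset]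
  have hsub : Kᶜ ∩ S ⊆ Kᶜ := Set.inter_subset_left
  have key := Cardinal.mk_diff_add_mk hsub
  rw [hKc] at key
  have hsmall : #(↥(Kᶜ ∩ S)) < Cardinal.continuum :=
    lt_of_le_of_lt (Cardinal.mk_le_mk_of_subset Set.inter_subset_right) hScard
  by_contra hne
  have hlt : #(↥(Kᶜ \ (Kᶜ ∩ S))) < Cardinal.continuum :=
    lt_of_le_of_ne (key ▸ le_add_right le_rfl) hne
  exact absurd key (ne_of_lt (add_lt_of_lt aleph0_le_continuum hlt hsmall))
end

section
/- If a topological space X is a countable union of compact metrizable subspaces, then there exists an injective Borel-measurable map from X onto a σ-compact metrizable space. -/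
/-- If a Hausdorff space `X` is a countable union of compact metrizable
subspaces, then there is an injective Borel map from `X` onto a σ-compact
metrizable space. -/
theorem stmt_5 {X : Type} [TopologicalSpace X] [T2Space X]
    (K : ℕ → Set X) (hcomp : ∀ n, IsCompact (K n))
    (hmet : ∀ n, TopologicalSpace.MetrizableSpace ↥(K n))
    (hcover : (⋃ n, K n) = Set.univ) :
    ∃ (Y : Type) (tY : TopologicalSpace Y),
      @TopologicalSpace.MetrizableSpace Y tY ∧ @SigmaCompactSpace Y tY ∧
      ∃ F : X → Y,
        @Measurable X Y (borel X) (@borel Y tY) F ∧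
        Function.Injective F ∧ Function.Surjective F := by
  classical
  -- the disjointified pieces
  set D : ℕ → Set X := fun n => K n \ ⋃ m < n, K m with hD
  have hKclosed : ∀ n, IsClosed (K n) := fun n => (hcomp n).isClosed
  have hUclosed : ∀ n, IsClosed (⋃ m < n, K m) := fun n =>
    (Set.finite_Iio n).isClosed_biUnion (fun m _ => hKclosed m)
  have hDsub : ∀ n, D n ⊆ K n := fun n => Set.diff_subset
  -- instances on the pieces
  haveI : ∀ n, TopologicalSpace.MetrizableSpace ↥(D n) := fun n => by
    haveI := hmet n
    exact (Topology.IsEmbedding.inclusion (hDsub n)).metrizableSpace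
  haveI hKcs : ∀ n, CompactSpace ↥(K n) := fun n => isCompact_iff_compactSpace.1 (hcomp n)
  have hopenemb : ∀ n, Topology.IsOpenEmbedding (Set.inclusion (hDsub n)) := fun n => by
    refine ⟨Topology.IsEmbedding.inclusion (hDsub n), ?_⟩
    have : Set.range (Set.inclusion (hDsub n)) =
        (Subtype.val : ↥(K n) → X) ⁻¹' (⋃ m < n, K m)ᶜ := by
      ext y
      simp only [Set.range_inclusion, Set.mem_setOf_eq, Set.mem_preimage, Set.mem_compl_iff]
      constructor
      · intro h; exact h.2
      · intro h; exact ⟨y.2, h⟩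
    rw [this]
    exact (hUclosed n).isOpen_compl.preimage continuous_subtype_val
  haveI : ∀ n, LocallyCompactSpace ↥(D n) := fun n => (hopenemb n).locallyCompactSpace
  haveI : ∀ n, SecondCountableTopology ↥(D n) := fun n => by
    haveI := hmet n
    letI := TopologicalSpace.metrizableSpaceMetric ↥(K n)
    haveI : SecondCountableTopology ↥(K n) := EMetric.secondCountable_of_sigmaCompact _
    exact (Topology.IsEmbedding.inclusion (hDsub n)).secondCountableTopology
  haveI : ∀ n, SigmaCompactSpace ↥(D n) := fun n =>
    sigmaCompactSpace_of_locallyCompact_secondCountable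
  refine ⟨Σ n, ↥(D n), inferInstance, ?_, inferInstance, ?_⟩
  · letI := fun n => TopologicalSpace.metrizableSpaceMetric ↥(D n)
    exact @EMetricSpace.metrizableSpace _ Metric.Sigma.metricSpace.toEMetricSpace
  · -- the map
    have hex : ∀ x : X, ∃ n, x ∈ K n := fun x => by
      have : x ∈ ⋃ n, K n := hcover ▸ Set.mem_univ x
      exact Set.mem_iUnion.1 this
    have hmemD : ∀ x : X, x ∈ D (Nat.find (hex x)) := fun x => by
      refine ⟨Nat.find_spec (hex x), ?_⟩
      simp only [Set.mem_iUnion]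
      rintro ⟨m, hm, hxm⟩
      exact Nat.find_min (hex x) hm hxm
    set F : X → Σ n, ↥(D n) := fun x => ⟨Nat.find (hex x), ⟨x, hmemD x⟩⟩ with hF
    have hfind : ∀ {n : ℕ} {x : X}, x ∈ D n → Nat.find (hex x) = n := by
      intro n x hx
      rw [Nat.find_eq_iff]
      refine ⟨hx.1, fun m hm hxm => ?_⟩
      exact hx.2 (Set.mem_iUnion.2 ⟨m, Set.mem_iUnion.2 ⟨hm, hxm⟩⟩)
    have hFD : ∀ (n : ℕ) (x : X) (hx : x ∈ D n), F x = ⟨n, ⟨x, hx⟩⟩ := by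
      intro n x hx
      have h := hfind hx
      subst h
      rfl
    refine ⟨F, ?_, ?_, ?_⟩
    · -- measurability
      letI : MeasurableSpace X := borel X
      haveI : BorelSpace X := ⟨rfl⟩
      letI : MeasurableSpace (Σ n, ↥(D n)) := borel _
      haveI : BorelSpace (Σ n, ↥(D n)) := ⟨rfl⟩
      have hDmeas : ∀ n, MeasurableSet (D n) := fun n =>
        ((hKclosed n).measurableSet).diff (hUclosed n).measurableSet
      refine measurable_of_isOpen fun U hU => ?_
      have hpre : F ⁻¹' U = ⋃ n, Subtype.val '' ((@Sigma.mk ℕ (fun k => ↥(D k)) n) ⁻¹' U) := by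
        ext x
        simp only [Set.mem_preimage, Set.mem_iUnion, Set.mem_image]
        constructor
        · intro hx
          exact ⟨Nat.find (hex x), ⟨x, hmemD x⟩, hx, rfl⟩
        · rintro ⟨n, y, hy, rfl⟩
          rw [hFD n y.1 y.2]
          simpa using hy
      rw [hpre]
      refine MeasurableSet.iUnion fun n => ?_
      have hop : IsOpen ((@Sigma.mk ℕ (fun k => ↥(D k)) n) ⁻¹' U) := hU.preimage continuous_sigmaMk
      rcases isOpen_induced_iff.1 hop with ⟨W, hW, hWeq⟩
      rw [← hWeq, Subtype.image_preimage_coe]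
      exact (hDmeas n).inter hW.measurableSet
    · -- injectivity
      intro x y hxy
      have := congrArg (fun p : Σ n, ↥(D n) => (p.2 : X)) hxy
      exact this
    · -- surjectivity
      rintro ⟨n, y, hy⟩
      exact ⟨y, hFD n y hy⟩
end

section
/- Let X be a separable metrizable space, E ⊆ X a countable dense subset, Y a second countable space, and ψ : C_p(X) → Y continuous (where C_p(X) carries the topology of pointwise convergence). Then there exists a countable set D with E ⊆ D ⊆ X and a continuous map ξ : C_D(X) → Y such that ψ = ξ ∘ (π_D restricted to C_p(X)), where C_D(X) = { f↾D : f ∈ C(X,ℝ) } ⊆ ℝ^D and π_D : ℝ^X → ℝ^D is the restriction map. -/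
open TopologicalSpace

/-- `C_p(X)`: continuous real functions with the topology of pointwise
convergence (subspace of `ℝ^X`). -/
def Cp (X : Type*) [TopologicalSpace X] : Type _ := {f : X → ℝ // Continuous f}

instance (X : Type*) [TopologicalSpace X] : TopologicalSpace (Cp X) :=
  instTopologicalSpaceSubtype

/-- `C_D(X) ⊆ ℝ^D`: restrictions to `D` of continuous real functions on `X`. -/
def CD (X : Type*) [TopologicalSpace X] (D : Set X) : Set (↥D → ℝ) :=
  {g | ∃ f : X → ℝ, Continuous f ∧ ∀ d : ↥D, g d = f ↑d}

/-- Factorization: a continuous map `ψ : C_p(X) → Y` into a second countable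
space factors through the restriction to some countable `D ⊇ E`. -/
theorem stmt_9 {X Y : Type} [TopologicalSpace X] [MetrizableSpace X]
    [SeparableSpace X] [TopologicalSpace Y] [SecondCountableTopology Y]
    (E : Set X) (hEc : E.Countable) (hEd : Dense E)
    (ψ : Cp X → Y) (hψ : Continuous ψ) :
    ∃ D : Set X, D.Countable ∧ E ⊆ D ∧
      ∃ ξ : ↥(CD X D) → Y, Continuous ξ ∧
        ∀ f : Cp X, ψ f = ξ ⟨fun d => f.1 ↑d, ⟨f.1, f.2, fun _ => rfl⟩⟩ := by
  classical
  haveI : SecondCountableTopology X := by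
    letI := TopologicalSpace.metrizableSpaceMetric X
    exact UniformSpace.secondCountable_of_separable X
  obtain ⟨𝒷, h𝒷c, -, h𝒷⟩ := exists_countable_basis X
  obtain ⟨b, hbc, -, hb⟩ := exists_countable_basis Y
  -- the countable "network" on `Cp X`
  set net : Set (Set X × ℚ × ℚ) → Set (Cp X) :=
    fun s => {f | ∀ p ∈ s, ∀ y ∈ p.1, f.1 y ∈ Set.Icc (p.2.1 : ℝ) (p.2.2 : ℝ)} with hnet
  set S : Set (Set (Set X × ℚ × ℚ)) :=
    {s | s.Finite ∧ s ⊆ 𝒷 ×ˢ (Set.univ : Set (ℚ × ℚ))} with hSdef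
  have hS : S.Countable :=
    Set.countable_setOf_finite_subset (h𝒷c.prod Set.countable_univ)
  -- key lemma: every point of an open set is inside a network element inside a
  -- basic open subset of the open set
  have key : ∀ U : Set (Cp X), IsOpen U → ∀ f ∈ U,
      ∃ s ∈ S, f ∈ net s ∧ ∃ A : Set X, ∃ W : X → Set ℝ,
        A.Finite ∧ (∀ x, IsOpen (W x)) ∧
        net s ⊆ {g : Cp X | ∀ x ∈ A, g.1 x ∈ W x} ∧
        {g : Cp X | ∀ x ∈ A, g.1 x ∈ W x} ⊆ U := by
    intro U hU f hf
    obtain ⟨V, hVo, hVU⟩ := isOpen_induced_iff.mp hU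
    have hfV : f.1 ∈ V := by
      have : f ∈ Subtype.val ⁻¹' V := hVU ▸ hf
      exact this
    obtain ⟨I, u, hu, hIu⟩ := (isOpen_pi_iff.mp hVo) f.1 hfV
    have hrat : ∀ x, x ∈ I → ∃ a c : ℚ, f.1 x ∈ Set.Ioo (a : ℝ) (c : ℝ) ∧
        Set.Icc (a : ℝ) (c : ℝ) ⊆ u x := by
      intro x hx
      obtain ⟨δ, hδ, hball⟩ := Metric.isOpen_iff.mp (hu x hx).1 _ (hu x hx).2
      obtain ⟨a, ha1, ha2⟩ := exists_rat_btwn (show f.1 x - δ < f.1 x by linarith)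
      obtain ⟨c, hc1, hc2⟩ := exists_rat_btwn (show f.1 x < f.1 x + δ by linarith)
      refine ⟨a, c, ⟨ha2, hc1⟩, fun y hy => hball ?_⟩
      rw [Metric.mem_ball, Real.dist_eq, abs_lt]
      obtain ⟨h1, h2⟩ := hy
      constructor <;> linarith
    choose! a c hac hIcc using hrat
    have hbas : ∀ x, x ∈ I → ∃ v ∈ 𝒷, x ∈ v ∧
        v ⊆ f.1 ⁻¹' Set.Ioo (a x : ℝ) (c x : ℝ) := by
      intro x hx
      exact h𝒷.exists_subset_of_mem_open (hac x hx) (isOpen_Ioo.preimage f.2)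
    choose! v hv𝒷 hvmem hvsub using hbas
    refine ⟨(fun x => (v x, a x, c x)) '' (I : Set X), ⟨(I.finite_toSet).image _, ?_⟩,
      ?_, (I : Set X), fun x => if x ∈ I then u x else Set.univ, I.finite_toSet,
      ?_, ?_, ?_⟩
    · rintro p ⟨x, hx, rfl⟩
      exact ⟨hv𝒷 x hx, Set.mem_univ _⟩
    · rintro p ⟨x, hx, rfl⟩ y hy
      have := hvsub x hx hy
      exact ⟨le_of_lt this.1, le_of_lt this.2⟩
    · intro x
      by_cases hx : x ∈ I
      · simpa [hx] using (hu x hx).1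
      · simp [hx]
    · intro g hg x hx
      have hxI : x ∈ I := hx
      have hmem : g.1 x ∈ Set.Icc (a x : ℝ) (c x : ℝ) :=
        hg (v x, a x, c x) ⟨x, hx, rfl⟩ x (hvmem x hx)
      have : g.1 x ∈ u x := hIcc x hxI hmem
      simpa [hxI] using this
    · intro g hg
      have : g.1 ∈ (I : Set X).pi u := by
        intro x hx
        have hxI : x ∈ I := hx
        have := hg x hx
        simpa [hxI] using this
      have : g ∈ Subtype.val ⁻¹' V := hIu this
      exact hVU ▸ this
  -- selection of basic open sets
  set P : Set Y → Set (Set X × ℚ × ℚ) → (Set X × (X → Set ℝ)) → Prop :=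
    fun V s AW => AW.1.Finite ∧ (∀ x, IsOpen (AW.2 x)) ∧
      net s ⊆ {g : Cp X | ∀ x ∈ AW.1, g.1 x ∈ AW.2 x} ∧
      {g : Cp X | ∀ x ∈ AW.1, g.1 x ∈ AW.2 x} ⊆ ψ ⁻¹' V with hPdef
  set good : Set Y → Set (Set X × ℚ × ℚ) → Prop :=
    fun V s => s ∈ S ∧ ∃ AW, P V s AW with hgooddef
  set sel : Set Y → Set (Set X × ℚ × ℚ) → Set X × (X → Set ℝ) :=
    fun V s => if h : ∃ AW, P V s AW then h.choose else (∅, fun _ => Set.univ)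
    with hseldef
  have sel_spec : ∀ V s, good V s → P V s (sel V s) := by
    intro V s hg
    simp only [hseldef, dif_pos hg.2]
    exact hg.2.choose_spec
  -- the countable set D
  set D : Set X := E ∪ ⋃ V ∈ b, ⋃ s ∈ {s | good V s}, (sel V s).1 with hDdef
  have hDc : D.Countable := by
    refine hEc.union (hbc.biUnion fun V _ => ?_)
    exact (hS.mono (fun s hs => hs.1)).biUnion
      (fun s hs => (sel_spec V s hs).1.countable)
  have hED : E ⊆ D := Set.subset_union_left
  have hDd : Dense D := hEd.mono hED
  -- the cover characterization
  have cover : ∀ V ∈ b, ∀ f : Cp X, ψ f ∈ V ↔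
      ∃ s, good V s ∧ ∀ x ∈ (sel V s).1, f.1 x ∈ (sel V s).2 x := by
    intro V hV f
    constructor
    · intro hf
      obtain ⟨s, hsS, hfs, A, W, hA, hW, h1, h2⟩ :=
        key (ψ ⁻¹' V) ((hb.isOpen hV).preimage hψ) f hf
      have hgood : good V s := ⟨hsS, ⟨(A, W), hA, hW, h1, h2⟩⟩
      exact ⟨s, hgood, fun x hx => (sel_spec V s hgood).2.2.1 hfs x hx⟩
    · rintro ⟨s, hgood, hfx⟩
      exact (sel_spec V s hgood).2.2.2 hfx
  -- the extension map and ξ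
  have extension : ∀ g : ↥(CD X D), ∃ F : Cp X, ∀ d : ↥D, g.1 d = F.1 ↑d := by
    rintro ⟨g, f, hf, hgf⟩
    exact ⟨⟨f, hf⟩, hgf⟩
  choose ext ext_spec using extension
  set ξ : ↥(CD X D) → Y := fun g => ψ (ext g) with hξdef
  refine ⟨D, hDc, hED, ξ, ?_, ?_⟩
  · -- continuity of ξ
    rw [hb.continuous_iff]
    intro V hV
    have hsub : ∀ s, good V s → (sel V s).1 ⊆ D := by
      intro s hg x hx
      exact Set.mem_union_right _ (Set.mem_biUnion hV (Set.mem_biUnion hg hx))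
    have heq : ξ ⁻¹' V = ⋃ (s : {s // good V s}),
        {g : ↥(CD X D) | ∀ d : ↥D, ↑d ∈ (sel V s.1).1 → g.1 d ∈ (sel V s.1).2 ↑d} := by
      ext g
      simp only [Set.mem_preimage, Set.mem_iUnion, Set.mem_setOf_eq, hξdef]
      rw [cover V hV (ext g)]
      constructor
      · rintro ⟨s, hg, h⟩
        exact ⟨⟨s, hg⟩, fun d hd => (ext_spec g d).symm ▸ h ↑d hd⟩
      · rintro ⟨⟨s, hg⟩, h⟩
        refine ⟨s, hg, fun x hx => ?_⟩
        have := h ⟨x, hsub s hg hx⟩ hx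
        rwa [ext_spec g ⟨x, hsub s hg hx⟩] at this
    rw [heq]
    refine isOpen_iUnion fun s => ?_
    have : {g : ↥(CD X D) | ∀ d : ↥D, ↑d ∈ (sel V s.1).1 → g.1 d ∈ (sel V s.1).2 ↑d}
        = Subtype.val ⁻¹' (⋂ d ∈ {d : ↥D | ↑d ∈ (sel V s.1).1},
            (fun h : ↥D → ℝ => h d) ⁻¹' (sel V s.1).2 ↑d) := by
      ext g
      simp [Set.mem_iInter]
    rw [this]
    refine IsOpen.preimage continuous_subtype_val ?_
    refine Set.Finite.isOpen_biInter ?_ fun d _ => ?_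
    · exact ((sel_spec V s.1 s.2).1).preimage Subtype.val_injective.injOn
    · exact ((sel_spec V s.1 s.2).2.1 _).preimage (continuous_apply d)
  · -- factorization
    intro f
    set e : ↥(CD X D) := ⟨fun d => f.1 ↑d, ⟨f.1, f.2, fun _ => rfl⟩⟩ with he
    have hagree : Set.EqOn f.1 (ext e).1 D := by
      intro x hx
      exact ext_spec e ⟨x, hx⟩
    have : f.1 = (ext e).1 := Continuous.ext_on hDd f.2 (ext e).2 hagree
    have : f = ext e := Subtype.ext this
    rw [hξdef]
    exact congrArg ψ this
end

section
/- Every Hausdorff topological space with a countable network admits a continuous bijection onto a Hausdorff space with a countable base. -/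
/-- Arhangel'skii–Ponomarev: every Hausdorff space with a countable network
condenses (admits a continuous bijection) onto a Hausdorff second countable
space. -/
theorem stmt_12 {X : Type} [TopologicalSpace X] [T2Space X]
    (N : Set (Set X)) (hNc : N.Countable)
    (hN : ∀ (x : X) (U : Set X), IsOpen U → x ∈ U → ∃ n ∈ N, x ∈ n ∧ n ⊆ U) :
    ∃ (Y : Type) (tY : TopologicalSpace Y),
      @T2Space Y tY ∧ @SecondCountableTopology Y tY ∧
      ∃ g : X → Y, @Continuous X Y _ tY g ∧ Function.Bijective g := by
  classical
  -- pairs of network elements that can be separated by disjoint open sets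
  let P : Set X × Set X → Prop := fun p =>
    ∃ U V : Set X, IsOpen U ∧ IsOpen V ∧ p.1 ⊆ U ∧ p.2 ⊆ V ∧ Disjoint U V
  let T : Set (Set X × Set X) := {p | p ∈ N ×ˢ N ∧ P p}
  have hTc : T.Countable := (hNc.prod hNc).mono fun p hp => hp.1
  -- choose separating open sets for each pair in T
  let U : Set X × Set X → Set X := fun p =>
    if h : P p then h.choose else ∅
  let V : Set X × Set X → Set X := fun p =>
    if h : P p then h.choose_spec.choose else ∅
  have hUV : ∀ p, P p → IsOpen (U p) ∧ IsOpen (V p) ∧ p.1 ⊆ U p ∧ p.2 ⊆ V p ∧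
      Disjoint (U p) (V p) := by
    intro p hp
    simp only [U, V, dif_pos hp]
    exact ⟨hp.choose_spec.choose_spec.1, hp.choose_spec.choose_spec.2.1,
      hp.choose_spec.choose_spec.2.2.1, hp.choose_spec.choose_spec.2.2.2.1,
      hp.choose_spec.choose_spec.2.2.2.2⟩
  let S : Set (Set X) := (U '' T) ∪ (V '' T)
  have hSc : S.Countable := (hTc.image U).union (hTc.image V)
  have hSopen : ∀ s ∈ S, IsOpen s := by
    rintro s (⟨p, hp, rfl⟩ | ⟨p, hp, rfl⟩)
    · exact (hUV p hp.2).1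
    · exact (hUV p hp.2).2.1
  have hT2 : ∀ x y : X, x ≠ y → ∃ u v : Set X,
      TopologicalSpace.GenerateOpen S u ∧ TopologicalSpace.GenerateOpen S v ∧
      x ∈ u ∧ y ∈ v ∧ Disjoint u v := by
    intro x y hxy
    obtain ⟨u, v, hu, hv, hxu, hyv, huv⟩ := t2_separation hxy
    obtain ⟨M, hM, hxM, hMu⟩ := hN x u hu hxu
    obtain ⟨M', hM', hyM', hM'v⟩ := hN y v hv hyv
    have hp : P (M, M') := ⟨u, v, hu, hv, hMu, hM'v, huv⟩
    have hpT : (M, M') ∈ T := ⟨⟨hM, hM'⟩, hp⟩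
    obtain ⟨_, _, hMU, hM'V, hdisj⟩ := hUV (M, M') hp
    exact ⟨U (M, M'), V (M, M'),
      TopologicalSpace.GenerateOpen.basic _ (Or.inl ⟨_, hpT, rfl⟩),
      TopologicalSpace.GenerateOpen.basic _ (Or.inr ⟨_, hpT, rfl⟩),
      hMU hxM, hM'V hyM', hdisj⟩
  refine ⟨X, TopologicalSpace.generateFrom S, ?_, ?_, id, ?_, Function.bijective_id⟩
  · exact @T2Space.mk X (TopologicalSpace.generateFrom S) hT2
  · exact @SecondCountableTopology.mk X (TopologicalSpace.generateFrom S) ⟨S, hSc, rfl⟩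
  · exact continuous_id_iff_le.mpr (le_generateFrom hSopen)
end

section
/- (Kuratowski extension theorem) Let A be a subset of a Polish space P and φ : A → ℝ^ℕ a map that is Borel measurable with respect to the subspace Borel structure on A. Then there exists a Borel set B ⊆ P with A ⊆ B and a Borel-measurable map φ'' : B → ℝ^ℕ extending φ. -/
open Filter Topology

/-- Core lemma: a measurable real-valued function on an arbitrary subset of a measurable
space extends to a measurable function on a measurable superset. -/
theorem extend_real_aux {P : Type} [MeasurableSpace P]
    (A : Set P) (f : ↥A → ℝ) (hf : Measurable f) :
    ∃ B : Set P, ∃ hAB : A ⊆ B, MeasurableSet B ∧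
      ∃ g : ↥B → ℝ, Measurable g ∧
        ∀ (a : P) (ha : a ∈ A), g ⟨a, hAB ha⟩ = f ⟨a, ha⟩ := by
  classical
  -- dyadic approximations
  have hFn : ∀ n : ℕ, Measurable fun a : ↥A => ⌊(2 : ℝ) ^ n * f a⌋ :=
    fun n => (measurable_const.mul hf).floor
  have hSn : ∀ (n : ℕ) (m : ℤ), ∃ S : Set P, MeasurableSet S ∧
      Subtype.val ⁻¹' S = (fun a : ↥A => ⌊(2 : ℝ) ^ n * f a⌋) ⁻¹' {m} := by
    intro n m
    exact MeasurableSpace.measurableSet_comap.mp ((hFn n) (measurableSet_singleton m))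
  choose S hSmeas hSpre using hSn
  let e : ℕ ≃ ℤ := (Denumerable.eqv ℤ).symm
  set p : ℕ → ℕ → P → Prop := fun n k x => x ∈ S n (e k) ∨ x ∉ ⋃ j, S n (e j) with hp_def
  have hp : ∀ (n : ℕ) (x : P), ∃ k, p n k x := by
    intro n x
    by_cases hx : x ∈ ⋃ j, S n (e j)
    · obtain ⟨j, hj⟩ := Set.mem_iUnion.mp hx
      exact ⟨j, Or.inl hj⟩
    · exact ⟨0, Or.inr hx⟩
  set g : ℕ → P → ℝ := fun n x => ((e (Nat.find (hp n x)) : ℤ) : ℝ) / 2 ^ n with hg_def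
  have hgmeas : ∀ n, Measurable (g n) := by
    intro n
    exact Measurable.find (f := fun k (_ : P) => ((e k : ℤ) : ℝ) / 2 ^ n)
      (p := p n) (fun k => measurable_const)
      (fun k => (hSmeas n (e k)).union
        (MeasurableSet.iUnion fun j => hSmeas n (e j)).compl) (hp n)
  -- on A, g n equals the dyadic approximation
  have hgA : ∀ (a : P) (ha : a ∈ A) (n : ℕ),
      g n a = ((⌊(2 : ℝ) ^ n * f ⟨a, ha⟩⌋ : ℤ) : ℝ) / 2 ^ n := by
    intro a ha n
    have hmem : a ∈ S n ⌊(2 : ℝ) ^ n * f ⟨a, ha⟩⌋ := by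
      have := hSpre n ⌊(2 : ℝ) ^ n * f ⟨a, ha⟩⌋
      have : (⟨a, ha⟩ : ↥A) ∈ Subtype.val ⁻¹' S n ⌊(2 : ℝ) ^ n * f ⟨a, ha⟩⌋ := by
        rw [this]; rfl
      exact this
    have hfind := Nat.find_spec (hp n a)
    rcases hfind with hin | hout
    · -- a ∈ S n (e kf), so the floor equals e kf
      have : (⟨a, ha⟩ : ↥A) ∈ Subtype.val ⁻¹' S n (e (Nat.find (hp n a))) := hin
      rw [hSpre n] at this
      have heq : ⌊(2 : ℝ) ^ n * f ⟨a, ha⟩⌋ = e (Nat.find (hp n a)) := this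
      simp only [hg_def, ← heq]
    · exact absurd (Set.mem_iUnion.mpr ⟨e.symm ⌊(2 : ℝ) ^ n * f ⟨a, ha⟩⌋, by
        simpa using hmem⟩) hout
  -- convergence on A
  have hconv : ∀ (a : P) (ha : a ∈ A),
      Tendsto (fun n => g n a) atTop (𝓝 (f ⟨a, ha⟩)) := by
    intro a ha
    rw [tendsto_iff_dist_tendsto_zero]
    apply squeeze_zero (fun n => dist_nonneg) (g := fun n => (2 : ℝ)⁻¹ ^ n)
    · intro n
      rw [hgA a ha n, Real.dist_eq]
      set y : ℝ := (2 : ℝ) ^ n * f ⟨a, ha⟩ with hy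
      have h2n : (0 : ℝ) < 2 ^ n := by positivity
      have heq : ((⌊y⌋ : ℝ)) / 2 ^ n - f ⟨a, ha⟩ = ((⌊y⌋ : ℝ) - y) / 2 ^ n := by
        rw [hy]; field_simp
      have h1 : (⌊y⌋ : ℝ) ≤ y := Int.floor_le y
      have h2 : y - 1 < (⌊y⌋ : ℝ) := Int.sub_one_lt_floor y
      have hb : |(⌊y⌋ : ℝ) - y| ≤ 1 := by rw [abs_le]; constructor <;> linarith
      calc |((⌊y⌋ : ℝ)) / 2 ^ n - f ⟨a, ha⟩| = |(⌊y⌋ : ℝ) - y| / 2 ^ n := by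
            rw [heq, abs_div, abs_of_pos h2n]
        _ ≤ 1 / 2 ^ n := by gcongr
        _ = (2 : ℝ)⁻¹ ^ n := by rw [one_div, inv_pow]
    · exact tendsto_pow_atTop_nhds_zero_of_lt_one (by norm_num) (by norm_num)
  -- the set of convergence
  refine ⟨{x | ∃ c, Tendsto (fun n => g n x) atTop (𝓝 c)},
    fun a ha => ⟨f ⟨a, ha⟩, hconv a ha⟩, MeasureTheory.measurableSet_exists_tendsto hgmeas, ?_⟩
  set B : Set P := {x | ∃ c, Tendsto (fun n => g n x) atTop (𝓝 c)} with hB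
  refine ⟨fun x => limUnder atTop (fun n => g n x.1), ?_, ?_⟩
  · have htend : ∀ x : ↥B, Tendsto (fun n => g n x.1) atTop
        (𝓝 (limUnder atTop (fun n => g n x.1))) :=
      fun x => tendsto_nhds_limUnder x.2
    exact measurable_of_tendsto_metrizable
      (fun n => (hgmeas n).comp measurable_subtype_coe)
      (tendsto_pi_nhds.mpr htend)
  · intro a ha
    exact (hconv a ha).limUnder_eq

/-- Kuratowski's extension theorem: a Borel map on an arbitrary subset `A` of a
Polish space `P` (with the relative Borel structure) extends to a Borel map on
some Borel set `B ⊇ A`. -/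
theorem stmt_16 {P : Type} [TopologicalSpace P] [PolishSpace P]
    [MeasurableSpace P] [BorelSpace P]
    (A : Set P) (φ : ↥A → (ℕ → ℝ)) (hφ : Measurable φ) :
    ∃ B : Set P, ∃ hAB : A ⊆ B, MeasurableSet B ∧
      ∃ φ'' : ↥B → (ℕ → ℝ), Measurable φ'' ∧
        ∀ (a : P) (ha : a ∈ A), φ'' ⟨a, hAB ha⟩ = φ ⟨a, ha⟩ := by
  have h : ∀ i : ℕ, ∃ B : Set P, ∃ hAB : A ⊆ B, MeasurableSet B ∧
      ∃ g : ↥B → ℝ, Measurable g ∧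
        ∀ (a : P) (ha : a ∈ A), g ⟨a, hAB ha⟩ = φ ⟨a, ha⟩ i :=
    fun i => extend_real_aux A (fun a => φ a i) ((measurable_pi_apply i).comp hφ)
  choose B hAB hBmeas g hgmeas hgA using h
  refine ⟨⋂ i, B i, fun a ha => Set.mem_iInter.mpr fun i => hAB i ha,
    MeasurableSet.iInter fun i => hBmeas i, ?_⟩
  refine ⟨fun x i => g i ⟨x.1, Set.mem_iInter.mp x.2 i⟩, ?_, ?_⟩
  · apply measurable_pi_lambda
    intro i
    exact (hgmeas i).comp ((measurable_subtype_coe).subtype_mk)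
  · intro a ha
    funext i
    exact hgA i a ha
end

section
/- The equality 𝔡 = 2^ℵ₀ (the dominating number equals the continuum) is equivalent to the statement: the intersection of fewer than continuum many Gδ subsets of ℝ, each containing ℚ, has cardinality 2^ℵ₀. -/
open Cardinal Filter

/-- The dominating number `𝔡`: the least cardinality of a family `D ⊆ ℕ^ℕ`
such that every `g : ℕ → ℕ` is eventually dominated by some member of `D`. -/
noncomputable def dominatingNumber : Cardinal :=
  sInf {c : Cardinal | ∃ D : Set (ℕ → ℕ), #↥D = c ∧
    ∀ g : ℕ → ℕ, ∃ f ∈ D, ∀ᶠ n in atTop, g n ≤ f n}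

namespace Stmt18

open Set Metric

lemma mk_nat_fun : #(ℕ → ℕ) = Cardinal.continuum := by
  rw [← Cardinal.power_def ℕ ℕ, Cardinal.mk_nat, Cardinal.aleph0_power_aleph0]

/-! ### An enumeration of the rationals inside ℝ -/

noncomputable def e : ℕ ≃ ℚ := (Denumerable.eqv ℚ).symm

noncomputable def q : ℕ → ℝ := fun n => ((e n : ℚ) : ℝ)

lemma q_mem_range (n : ℕ) : q n ∈ Set.range ((↑) : ℚ → ℝ) := ⟨e n, rfl⟩

lemma exists_q_eq {x : ℝ} (hx : x ∈ Set.range ((↑) : ℚ → ℝ)) : ∃ n, q n = x := by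
  obtain ⟨r, rfl⟩ := hx
  exact ⟨e.symm r, by simp [q]⟩

/-! ### The Gδ sets used in the "backward" direction -/

noncomputable def Gset (f : ℕ → ℕ) : Set ℝ :=
  ⋂ n, ⋃ k, Metric.ball (q k) ((2 : ℝ)⁻¹ ^ f (max k n))

lemma isGδ_Gset (f : ℕ → ℕ) : IsGδ (Gset f) :=
  IsGδ.iInter_of_isOpen fun _ => isOpen_iUnion fun _ => Metric.isOpen_ball

lemma subset_Gset (f : ℕ → ℕ) : Set.range ((↑) : ℚ → ℝ) ⊆ Gset f := by
  intro x hx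
  obtain ⟨j, rfl⟩ := exists_q_eq hx
  refine Set.mem_iInter.2 fun n => Set.mem_iUnion.2 ⟨j, ?_⟩
  rw [Metric.mem_ball, dist_self]
  positivity

lemma inter_Gset_subset {D : Set (ℕ → ℕ)}
    (hD : ∀ g : ℕ → ℕ, ∃ f ∈ D, ∀ᶠ n in atTop, g n ≤ f n)
    {x : ℝ} (hx : ∀ f ∈ D, x ∈ Gset f) :
    x ∈ Set.range ((↑) : ℚ → ℝ) := by
  by_contra hxq
  have hdist : ∀ j : ℕ, ∃ m : ℕ, (2 : ℝ)⁻¹ ^ m < dist x (q j) := by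
    intro j
    have h0 : 0 < dist x (q j) := by
      rw [dist_pos]
      rintro rfl
      exact hxq (q_mem_range j)
    exact exists_pow_lt_of_lt_one h0 (by norm_num)
  choose m hm using hdist
  obtain ⟨f, hfD, hf⟩ := hD (fun k => (Finset.range (k + 1)).sup m)
  obtain ⟨N, hN⟩ := hf.exists_forall_of_atTop
  have hxG := Set.mem_iInter.1 (hx f hfD) N
  obtain ⟨k, hk⟩ := Set.mem_iUnion.1 hxG
  rw [Metric.mem_ball] at hk
  have h1 : (Finset.range (max k N + 1)).sup m ≤ f (max k N) := hN _ (le_max_right _ _)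
  have h2 : m k ≤ (Finset.range (max k N + 1)).sup m :=
    Finset.le_sup (Finset.mem_range.2 (by omega))
  have h3 : (2 : ℝ)⁻¹ ^ f (max k N) ≤ (2 : ℝ)⁻¹ ^ m k :=
    pow_le_pow_of_le_one (by norm_num) (by norm_num) (h2.trans h1)
  exact absurd ((hm k).trans (hk.trans_le h3)) (lt_irrefl _)

/-! ### The tree of intervals for the "forward" direction -/

noncomputable def pl : List ℕ → ℚ × ℚ
  | [] => (0, 1)
  | k :: s => ((pl s).1 + (pl s).2 * (1 / 4) ^ (k + 1), (pl s).2 * (1 / 4) ^ (k + 1) / 2)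

noncomputable def pp (s : List ℕ) : ℝ := ((pl s).1 : ℝ)
noncomputable def ll (s : List ℕ) : ℝ := ((pl s).2 : ℝ)

lemma pp_rat (s : List ℕ) : pp s ∈ Set.range ((↑) : ℚ → ℝ) := ⟨(pl s).1, rfl⟩

lemma pp_cons (k : ℕ) (s : List ℕ) :
    pp (k :: s) = pp s + ll s * (4 : ℝ)⁻¹ ^ (k + 1) := by
  simp only [pp, ll, pl]
  push_cast
  ring

lemma ll_cons (k : ℕ) (s : List ℕ) :
    ll (k :: s) = ll s * (4 : ℝ)⁻¹ ^ (k + 1) / 2 := by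
  simp only [pp, ll, pl]
  push_cast
  ring

lemma ll_pos : ∀ s : List ℕ, 0 < ll s := by
  intro s
  induction s with
  | nil => norm_num [ll, pl]
  | cons k s ih => rw [ll_cons]; positivity

noncomputable def J (s : List ℕ) : Set ℝ := Set.Icc (pp s) (pp s + ll s)

lemma mem_J_cons {y : ℝ} {k : ℕ} {s : List ℕ} (h : y ∈ J (k :: s)) :
    pp s + ll s * (4 : ℝ)⁻¹ ^ (k + 1) ≤ y ∧
      y ≤ pp s + ll s * ((3 / 2) * (4 : ℝ)⁻¹ ^ (k + 1)) := by
  obtain ⟨h1, h2⟩ := h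
  rw [pp_cons] at h1
  rw [pp_cons, ll_cons] at h2
  constructor
  · exact h1
  · nlinarith [ll_pos s, pow_pos (by norm_num : (0:ℝ) < 4⁻¹) (k + 1)]

lemma pow_quarter_le {n m : ℕ} (h : n ≤ m) : (4 : ℝ)⁻¹ ^ m ≤ (4 : ℝ)⁻¹ ^ n :=
  pow_le_pow_of_le_one (by norm_num) (by norm_num) h

lemma J_cons_subset (k : ℕ) (s : List ℕ) : J (k :: s) ⊆ J s := by
  intro y hy
  obtain ⟨h1, h2⟩ := mem_J_cons hy
  have h3 : (4 : ℝ)⁻¹ ^ (k + 1) ≤ (4 : ℝ)⁻¹ ^ 1 := pow_quarter_le (by omega)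
  have h4 : (0:ℝ) < (4 : ℝ)⁻¹ ^ (k + 1) := pow_pos (by norm_num) _
  constructor
  · nlinarith [ll_pos s]
  · nlinarith [ll_pos s]

lemma J_disjoint {k k' : ℕ} (hkk : k ≠ k') (s : List ℕ) {y : ℝ}
    (h : y ∈ J (k :: s)) (h' : y ∈ J (k' :: s)) : False := by
  wlog hlt : k < k' generalizing k k'
  · exact this hkk.symm h' h (by omega)
  obtain ⟨h1, _⟩ := mem_J_cons h
  obtain ⟨_, h2⟩ := mem_J_cons h'
  have h3 : (4 : ℝ)⁻¹ ^ (k' + 1) ≤ (4 : ℝ)⁻¹ ^ (k + 2) := pow_quarter_le (by omega)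
  have h4 : (4 : ℝ)⁻¹ ^ (k + 2) = (4 : ℝ)⁻¹ ^ (k + 1) * 4⁻¹ := by ring
  have h5 : (0:ℝ) < (4 : ℝ)⁻¹ ^ (k + 1) := pow_pos (by norm_num) _
  nlinarith [ll_pos s]

/-! ### Branches -/

def seg (a : ℕ → ℕ) : ℕ → List ℕ
  | 0 => []
  | n + 1 => a n :: seg a n

lemma seg_length (a : ℕ → ℕ) : ∀ n, (seg a n).length = n := by
  intro n
  induction n with
  | zero => rfl
  | succ n ih => simp [seg, ih]

lemma J_seg_mono (a : ℕ → ℕ) {m n : ℕ} (h : m ≤ n) : J (seg a n) ⊆ J (seg a m) := by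
  induction n with
  | zero => rw [Nat.le_zero.1 h]
  | succ n ih =>
    rcases Nat.lt_or_ge m (n + 1) with h' | h'
    · exact (J_cons_subset _ _).trans (ih (by omega))
    · rw [Nat.le_antisymm h h']

lemma pp_mem_J (s : List ℕ) : pp s ∈ J s :=
  ⟨le_refl _, by nlinarith [ll_pos s]⟩

lemma pp_seg_mem (a : ℕ → ℕ) {m n : ℕ} (h : m ≤ n) : pp (seg a n) ∈ J (seg a m) :=
  J_seg_mono a h (pp_mem_J _)

noncomputable def xa (a : ℕ → ℕ) : ℝ := ⨆ n, pp (seg a n)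

lemma xa_bdd (a : ℕ → ℕ) : BddAbove (Set.range fun n => pp (seg a n)) := by
  refine ⟨pp (seg a 0) + ll (seg a 0), ?_⟩
  rintro y ⟨n, rfl⟩
  exact (pp_seg_mem a (Nat.zero_le n)).2

lemma xa_mem (a : ℕ → ℕ) (m : ℕ) : xa a ∈ J (seg a m) := by
  constructor
  · exact le_ciSup (xa_bdd a) m
  · refine ciSup_le fun n => ?_
    have h1 : pp (seg a n) ≤ pp (seg a (max m n)) :=
      (pp_seg_mem a (le_max_right m n)).1
    exact h1.trans (pp_seg_mem a (le_max_left m n)).2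

lemma seg_eq_of (a b : ℕ → ℕ) : ∀ n, (∀ m < n, a m = b m) → seg a n = seg b n := by
  intro n
  induction n with
  | zero => intro _; rfl
  | succ n ih =>
    intro h
    simp only [seg]
    rw [h n (by omega), ih (fun m hm => h m (by omega))]

lemma xa_inj : Function.Injective xa := by
  intro a b hab
  by_contra hne
  have hex : ∃ n, a n ≠ b n := by
    by_contra h'
    push_neg at h'
    exact hne (funext h')
  classical
  set n₀ := Nat.find hex with hn₀
  have hseg : seg a n₀ = seg b n₀ :=
    seg_eq_of a b n₀ fun m hm => by_contra fun h => Nat.find_min hex hm h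
  have h1 : xa a ∈ J (a n₀ :: seg a n₀) := xa_mem a (n₀ + 1)
  have h2 : xa b ∈ J (b n₀ :: seg a n₀) := by
    have := xa_mem b (n₀ + 1)
    simpa [seg, ← hseg] using this
  rw [hab] at h1
  exact J_disjoint (Nat.find_spec hex) _ h1 h2

/-! ### Avoiding a closed set disjoint from the rationals -/

noncomputable def Nsc (s : List ℕ) (C : Set ℝ) : ℕ :=
  sInf {N : ℕ | ll s * (4 : ℝ)⁻¹ ^ N < Metric.infDist (pp s) C}

lemma Nsc_spec {C : Set ℝ} (hC : IsClosed C) (hne : C.Nonempty) {s : List ℕ}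
    (hps : pp s ∉ C) : ll s * (4 : ℝ)⁻¹ ^ Nsc s C < Metric.infDist (pp s) C := by
  have hpos : 0 < Metric.infDist (pp s) C := (hC.notMem_iff_infDist_pos hne).1 hps
  have hex : ∃ N : ℕ, ll s * (4 : ℝ)⁻¹ ^ N < Metric.infDist (pp s) C := by
    obtain ⟨N, hN⟩ := exists_pow_lt_of_lt_one
      (x := Metric.infDist (pp s) C / ll s) (y := (4:ℝ)⁻¹)
      (div_pos hpos (ll_pos s)) (by norm_num)
    refine ⟨N, ?_⟩
    rw [div_eq_mul_inv] at hN
    have := mul_lt_mul_of_pos_right hN (ll_pos s)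
    calc ll s * (4:ℝ)⁻¹ ^ N = (4:ℝ)⁻¹ ^ N * ll s := by ring
    _ < Metric.infDist (pp s) C * (ll s)⁻¹ * ll s := this
    _ = Metric.infDist (pp s) C := by
      rw [mul_assoc, inv_mul_cancel₀ (ll_pos s).ne', mul_one]
  exact Nat.sInf_mem hex

lemma avoid {C : Set ℝ} (hC : IsClosed C) (hne : C.Nonempty) {s : List ℕ}
    (hps : pp s ∉ C) {k : ℕ} (hk : Nsc s C ≤ k) {y : ℝ}
    (hy : y ∈ J (k :: s)) : y ∉ C := by
  intro hyC
  have h1 : Metric.infDist (pp s) C ≤ dist (pp s) y :=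
    Metric.infDist_le_dist_of_mem hyC
  obtain ⟨hl, hr⟩ := mem_J_cons hy
  have hd : dist (pp s) y = y - pp s := by
    rw [Real.dist_eq, abs_sub_comm, abs_of_nonneg]
    nlinarith [ll_pos s, pow_pos (by norm_num : (0:ℝ) < 4⁻¹) (k + 1)]
  have h3 : (4 : ℝ)⁻¹ ^ (k + 1) = (4 : ℝ)⁻¹ ^ k * 4⁻¹ := by ring
  have h4 : (4 : ℝ)⁻¹ ^ k ≤ (4 : ℝ)⁻¹ ^ Nsc s C := pow_quarter_le hk
  have h5 := Nsc_spec hC hne hps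
  have h6 : (0:ℝ) < (4 : ℝ)⁻¹ ^ k := pow_pos (by norm_num) _
  nlinarith [ll_pos s]

def Ssc (C : Set ℝ) (n : ℕ) : Set (List ℕ) :=
  {s | s.length = n ∧ (J s ∩ C).Nonempty}

lemma Ssc_finite {C : Set ℝ} (hC : IsClosed C)
    (hQ : ∀ r : ℚ, ((r : ℝ)) ∉ C) (n : ℕ) : (Ssc C n).Finite := by
  rcases C.eq_empty_or_nonempty with rfl | hne
  · have : Ssc ∅ n = ∅ := by
      ext s; simp [Ssc]
    rw [this]; exact Set.finite_empty
  · induction n with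
    | zero =>
      refine (Set.finite_singleton ([] : List ℕ)).subset ?_
      rintro s ⟨hs, -⟩
      simp [List.length_eq_zero_iff.1 hs]
    | succ n ih =>
      refine Set.Finite.subset
        (Set.Finite.biUnion ih fun t _ => (Set.finite_Iio (Nsc t C)).image fun k => k :: t) ?_
      rintro s ⟨hlen, hne'⟩
      cases s with
      | nil => simp at hlen
      | cons k t =>
        have ht : t ∈ Ssc C n := by
          refine ⟨by simpa using hlen, ?_⟩
          obtain ⟨y, hy1, hy2⟩ := hne'
          exact ⟨y, J_cons_subset k t hy1, hy2⟩
        have hps : pp t ∉ C := by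
          obtain ⟨r, hr⟩ := pp_rat t
          rw [← hr]; exact hQ r
        have hk : k < Nsc t C := by
          by_contra hk'
          obtain ⟨y, hy1, hy2⟩ := hne'
          exact avoid hC hne hps (not_lt.1 hk') hy1 hy2
        exact Set.mem_biUnion ht ⟨k, hk, rfl⟩

noncomputable def fC (C : Set ℝ) (n : ℕ) : ℕ :=
  sSup ((fun s => Nsc s C) '' Ssc C n)

lemma fC_bound {C : Set ℝ} (hC : IsClosed C) (hQ : ∀ r : ℚ, ((r : ℝ)) ∉ C)
    {n : ℕ} {s : List ℕ} (hs : s ∈ Ssc C n) : Nsc s C ≤ fC C n :=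
  le_csSup ((Ssc_finite hC hQ n).image _).bddAbove ⟨s, hs, rfl⟩

lemma xa_avoid {C : Set ℝ} (hC : IsClosed C) (hQ : ∀ r : ℚ, ((r : ℝ)) ∉ C)
    (a : ℕ → ℕ) (h : ∃ n, fC C n < a n) : xa a ∉ C := by
  rcases C.eq_empty_or_nonempty with rfl | hne
  · simp
  intro hxC
  obtain ⟨n, hn⟩ := h
  have hmem : seg a n ∈ Ssc C n := ⟨seg_length a n, ⟨xa a, xa_mem a n, hxC⟩⟩
  have h1 : Nsc (seg a n) C ≤ fC C n := fC_bound hC hQ hmem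
  have hps : pp (seg a n) ∉ C := by
    obtain ⟨r, hr⟩ := pp_rat (seg a n)
    rw [← hr]; exact hQ r
  have h2 : xa a ∈ J (a n :: seg a n) := xa_mem a (n + 1)
  exact avoid hC hne hps (by omega) h2 hxC

end Stmt18

open Stmt18 in
/-- `𝔡 = 2^ℵ₀` is equivalent to: any intersection of fewer than continuum many
`Gδ` subsets of `ℝ`, each containing `ℚ`, has cardinality continuum. -/
theorem stmt_18 :
    dominatingNumber = Cardinal.continuum ↔
      ∀ (ι : Type) (A : ι → Set ℝ), #ι < Cardinal.continuum →
        (∀ i, IsGδ (A i)) → (∀ i, Set.range ((↑) : ℚ → ℝ) ⊆ A i) →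
        #↥(⋂ i, A i) = Cardinal.continuum := by
  have hconti : Cardinal.continuum ∈ {c : Cardinal | ∃ D : Set (ℕ → ℕ), #↥D = c ∧
      ∀ g : ℕ → ℕ, ∃ f ∈ D, ∀ᶠ n in atTop, g n ≤ f n} := by
    refine ⟨Set.univ, ?_, fun g => ⟨g, Set.mem_univ g, Eventually.of_forall fun _ => le_rfl⟩⟩
    rw [Cardinal.mk_univ, mk_nat_fun]
  constructor
  · -- forward direction
    intro hd ι A hlt hGδ hsub
    refine le_antisymm ((Cardinal.mk_set_le _).trans_eq Cardinal.mk_real) ?_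
    choose U hUopen hUeq using fun i => (hGδ i).eq_iInter_nat
    set C : ι × ℕ → Set ℝ := fun j => (U j.1 j.2)ᶜ with hCdef
    have hCclosed : ∀ j, IsClosed (C j) := fun j => (hUopen _ _).isClosed_compl
    have hCQ : ∀ (j : ι × ℕ) (r : ℚ), ((r : ℝ)) ∉ C j := by
      intro j r hr
      have h1 : ((r : ℝ)) ∈ A j.1 := hsub j.1 ⟨r, rfl⟩
      rw [hUeq j.1] at h1
      exact hr (Set.mem_iInter.1 h1 j.2)
    have hnotdom : ¬ ∀ g : ℕ → ℕ, ∃ j : ι × ℕ, ∀ᶠ n in atTop, g n ≤ fC (C j) n := by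
      intro hdom
      have hle : dominatingNumber ≤ #↥(Set.range fun j : ι × ℕ => fC (C j)) := by
        refine csInf_le' ⟨Set.range fun j : ι × ℕ => fC (C j), rfl, fun g => ?_⟩
        obtain ⟨j, hj⟩ := hdom g
        exact ⟨fC (C j), ⟨j, rfl⟩, hj⟩
      have hsmall : #↥(Set.range fun j : ι × ℕ => fC (C j)) < Cardinal.continuum := by
        refine lt_of_le_of_lt (Cardinal.mk_range_le) ?_
        have : #(ι × ℕ) = #ι * ℵ₀ := by simp
        rw [this]
        exact Cardinal.mul_lt_of_lt Cardinal.aleph0_le_continuum hlt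
          Cardinal.aleph0_lt_continuum
      rw [hd] at hle
      exact absurd (hle.trans_lt hsmall) (lt_irrefl _)
    push_neg at hnotdom
    obtain ⟨g, hg⟩ := hnotdom
    have hg' : ∀ j : ι × ℕ, ∃ n, fC (C j) n < g n := by
      intro j
      obtain ⟨n, hn⟩ := (Filter.not_eventually.1 (hg j)).exists
      exact ⟨n, not_not.1 hn⟩
    have hxmem : ∀ z : ℕ → ℕ, xa (fun n => g n + z n) ∈ ⋂ i, A i := by
      intro z
      refine Set.mem_iInter.2 fun i => ?_
      rw [hUeq i]
      refine Set.mem_iInter.2 fun m => ?_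
      by_contra hx
      obtain ⟨n, hn⟩ := hg' (i, m)
      exact xa_avoid (hCclosed (i, m)) (hCQ (i, m)) (fun n => g n + z n)
        ⟨n, hn.trans_le (Nat.le_add_right _ _)⟩ hx
    have hinj : Function.Injective
        (fun z : ℕ → ℕ => (⟨xa (fun n => g n + z n), hxmem z⟩ : ↥(⋂ i, A i))) := by
      intro z z' h
      have h1 : xa (fun n => g n + z n) = xa (fun n => g n + z' n) :=
        congrArg Subtype.val h
      have h2 := xa_inj h1
      funext n
      have := congrFun h2 n
      omega
    have := Cardinal.mk_le_of_injective hinj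
    rwa [mk_nat_fun] at this
  · -- backward direction
    intro hR
    have hle : dominatingNumber ≤ Cardinal.continuum := csInf_le' hconti
    refine hle.antisymm ?_
    by_contra hlt'
    have hlt : dominatingNumber < Cardinal.continuum := lt_of_le_of_ne hle
      (fun h => hlt' h.ge)
    obtain ⟨D, hDcard, hDdom⟩ :=
      csInf_mem (s := {c : Cardinal | ∃ D : Set (ℕ → ℕ), #↥D = c ∧
        ∀ g : ℕ → ℕ, ∃ f ∈ D, ∀ᶠ n in atTop, g n ≤ f n}) ⟨_, hconti⟩
    have h1 := hR (↥D) (fun f => Gset f.1) (by rw [hDcard]; exact hlt)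
      (fun f => isGδ_Gset _) (fun f => subset_Gset _)
    have h2 : (⋂ f : ↥D, Gset f.1) = Set.range ((↑) : ℚ → ℝ) := by
      apply subset_antisymm
      · intro x hx
        exact inter_Gset_subset hDdom fun f hf => Set.mem_iInter.1 hx ⟨f, hf⟩
      · intro x hx
        exact Set.mem_iInter.2 fun f => subset_Gset _ hx
    rw [h2, Cardinal.mk_range_eq _ Rat.cast_injective, Cardinal.mkRat] at h1
    exact absurd h1 Cardinal.aleph0_lt_continuum.ne
end
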